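/- Let Q be a monotone submodular set function with Q(∅) = 0 and let (A_i) be the ε-additive approximate greedy sequence (each step within ε ≥ 0 of the best marginal gain over Θ). Then for every l with 0 ≤ l ≤ k and every A* with |A*| = k, Q(A_l) ≥ (1 − e^{−l/k})·Q(A*) − k·ε. -/

import Mathlib

private lemma sub_sum_bound {Θ : Type*} [DecidableEq Θ] (Q : Finset Θ → ℝ)
    (hsub : ∀ (A A' : Finset Θ) (θ : Θ),
      Q (A ∪ A' ∪ {θ}) - Q (A ∪ A') ≤ Q (A ∪ {θ}) - Q A)
    (B : Finset Θ) (S : Finset Θ) :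
    Q (B ∪ S) ≤ Q B + ∑ θ ∈ S, (Q (insert θ B) - Q B) := by
  induction S using Finset.induction_on with
  | empty => simp
  | @insert a S' ha ih =>
    have h1 := hsub B S' a
    have h2 : B ∪ insert a S' = B ∪ S' ∪ {a} := by
      ext x; simp [or_comm, or_assoc, or_left_comm]
    have h3 : B ∪ {a} = insert a B := by
      ext x; simp [or_comm]
    rw [h2, Finset.sum_insert ha]
    rw [h3] at h1
    linarith

/-- Additive-error greedy guarantee for every prefix length `l`. -/
theorem stmt_14 {Θ : Type*} [DecidableEq Θ] (Q : Finset Θ → ℝ)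
    (hmono : ∀ A B : Finset Θ, A ⊆ B → Q A ≤ Q B)
    (hsub : ∀ (A A' : Finset Θ) (θ : Θ),
      Q (A ∪ A' ∪ {θ}) - Q (A ∪ A') ≤ Q (A ∪ {θ}) - Q A)
    (hempty : Q ∅ = 0)
    (k : ℕ) (hk : 1 ≤ k) (ε : ℝ) (hε : 0 ≤ ε)
    (A : ℕ → Finset Θ) (θseq : ℕ → Θ)
    (hA0 : A 0 = ∅) (hAsucc : ∀ i, A (i + 1) = insert (θseq (i + 1)) (A i))
    (hgreedy : ∀ i, ∀ θ : Θ,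
      Q (insert θ (A i)) - Q (A i) ≤ (Q (A (i + 1)) - Q (A i)) + ε) :
    ∀ l ≤ k, ∀ Astar : Finset Θ, Astar.card = k →
      Q (A l) ≥ (1 - Real.exp (-(l : ℝ) / (k : ℝ))) * Q Astar - (k : ℝ) * ε := by
  intro l hl Astar hcard
  have hkpos : (0 : ℝ) < (k : ℝ) := by exact_mod_cast Nat.lt_of_lt_of_le Nat.zero_lt_one hk
  obtain ⟨c, hc⟩ : ∃ c : ℝ, c = 1 - 1 / (k : ℝ) := ⟨_, rfl⟩
  have hc0 : 0 ≤ c := by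
    have h : 1 / (k : ℝ) ≤ 1 := by
      rw [div_le_one hkpos]; exact_mod_cast hk
    rw [hc]; linarith
  have hc1 : c ≤ 1 := by
    have : 0 < 1 / (k : ℝ) := by positivity
    rw [hc]; linarith
  have hQstar0 : 0 ≤ Q Astar := by
    have := hmono ∅ Astar (Finset.empty_subset _)
    linarith [this, hempty.ge]
  -- per-step recursion
  have key : ∀ i, Q Astar - Q (A (i + 1)) ≤ c * (Q Astar - Q (A i)) + ε := by
    intro i
    have h1 : Q Astar ≤ Q (A i ∪ Astar) := hmono _ _ Finset.subset_union_right
    have h2 := sub_sum_bound Q hsub (A i) Astar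
    have h3 : ∑ θ ∈ Astar, (Q (insert θ (A i)) - Q (A i))
        ≤ ∑ _θ ∈ Astar, ((Q (A (i + 1)) - Q (A i)) + ε) :=
      Finset.sum_le_sum fun θ _ => hgreedy i θ
    rw [Finset.sum_const, hcard] at h3
    have h4 : Q Astar - Q (A i) ≤ (k : ℝ) * ((Q (A (i + 1)) - Q (A i)) + ε) := by
      have := h3
      simp only [nsmul_eq_mul] at this
      linarith
    have hgain : (Q Astar - Q (A i)) / (k : ℝ) - ε ≤ Q (A (i + 1)) - Q (A i) := by
      rw [sub_le_iff_le_add, div_le_iff₀ hkpos]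
      nlinarith
    have : c * (Q Astar - Q (A i)) = (Q Astar - Q (A i)) - (Q Astar - Q (A i)) / (k : ℝ) := by
      rw [hc]; ring
    linarith [this]
  -- inductive bound
  have bound : ∀ m : ℕ, Q Astar - Q (A m) ≤ c ^ m * Q Astar + (m : ℝ) * ε := by
    intro m
    induction m with
    | zero => simp [hA0, hempty]
    | succ n ih =>
      have h1 := key n
      have h2 : c * (Q Astar - Q (A n)) ≤ c * (c ^ n * Q Astar + (n : ℝ) * ε) :=
        mul_le_mul_of_nonneg_left ih hc0
      have h3 : c * ((n : ℝ) * ε) ≤ (n : ℝ) * ε := by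
        have hn : 0 ≤ (n : ℝ) * ε := by positivity
        nlinarith
    
      push_cast
      calc Q Astar - Q (A (n + 1)) ≤ c * (Q Astar - Q (A n)) + ε := h1
        _ ≤ c * (c ^ n * Q Astar) + (n : ℝ) * ε + ε := by nlinarith
        _ = c ^ (n + 1) * Q Astar + ((n : ℝ) + 1) * ε := by ring
  have hb := bound l
  -- c^l ≤ exp(-l/k)
  have hexp : c ^ l ≤ Real.exp (-(l : ℝ) / (k : ℝ)) := by
    have h1 : c ≤ Real.exp (-(1 / (k : ℝ))) := by
      have := Real.add_one_le_exp (-(1 / (k : ℝ)))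
      rw [hc]; linarith
    calc c ^ l ≤ (Real.exp (-(1 / (k : ℝ)))) ^ l := pow_le_pow_left₀ hc0 h1 l
      _ = Real.exp ((l : ℝ) * (-(1 / (k : ℝ)))) := by rw [← Real.exp_nat_mul]
      _ = Real.exp (-(l : ℝ) / (k : ℝ)) := by ring_nf
  have hlk : (l : ℝ) * ε ≤ (k : ℝ) * ε := by
    have : (l : ℝ) ≤ (k : ℝ) := by exact_mod_cast hl
    nlinarith
  have : c ^ l * Q Astar ≤ Real.exp (-(l : ℝ) / (k : ℝ)) * Q Astar :=
    mul_le_mul_of_nonneg_right hexp hQstar0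
  nlinarith
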